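/- As x → 1 from the right, ( φ(x)·b₀(x) + (9/280)·2^{−1/3} ) / ζ(x) tends to (179/6300)·2^{−2/3}, where φ(x) = ζ(x)/(x²−1), b₀(x) = −(1/(2·ζ(x)^{1/2}))·( x(x²−6)/(12(x²−1)^{3/2}) + 5/(24·ζ(x)^{3/2}) ), and ζ(x) = ( (3/4)·( x·√(x²−1) − arcosh x ) )^{2/3}. That is, in the expansion φ·b₀ = −(β₀ + β₁ζ + ⋯) one has β₁ = −(179/6300)·2^{−2/3}. -/

import Mathlib

set_option maxHeartbeats 1000000

open Real Filter

/-- The inverse hyperbolic cosine, `arcosh x = log (x + √(x² - 1))`. -/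
noncomputable def arcosh (x : ℝ) : ℝ := Real.log (x + Real.sqrt (x ^ 2 - 1))

/-- The variable `ζ(x) = ((3/4)(x√(x²-1) - arcosh x))^{2/3}` for `x ≥ 1`. -/
noncomputable def zeta (x : ℝ) : ℝ :=
  ((3 / 4) * (x * Real.sqrt (x ^ 2 - 1) - _root_.arcosh x)) ^ ((2 : ℝ) / 3)

/-- The function `φ(x) = ζ(x)/(x² - 1)`. -/
noncomputable def phi (x : ℝ) : ℝ := zeta x / (x ^ 2 - 1)

/-- The coefficient function
`b₀(x) = -(1/(2ζ^{1/2}))·(x(x²-6)/(12(x²-1)^{3/2}) + 5/(24ζ^{3/2}))`. -/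
noncomputable def b0 (x : ℝ) : ℝ :=
  -(1 / (2 * zeta x ^ ((1 : ℝ) / 2))) *
    (x * (x ^ 2 - 6) / (12 * (x ^ 2 - 1) ^ ((3 : ℝ) / 2)) +
      5 / (24 * zeta x ^ ((3 : ℝ) / 2)))

namespace CoeffAux

noncomputable def Fc (t : ℝ) : ℝ := (3 / 4) * (Real.cosh t * Real.sinh t - t)

noncomputable def Vc (t : ℝ) : ℝ := Fc t ^ ((1 : ℝ) / 3)

noncomputable def c0 : ℝ := 9 / 280 * (2 : ℝ) ^ (-(1 : ℝ) / 3)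

noncomputable def Gam (t : ℝ) : ℝ :=
  (-2 * Real.cosh t * (Real.cosh t ^ 2 - 6) * Fc t - 5 * Real.sinh t ^ 3
      + 48 * c0 * Real.sinh t ^ 5 * Vc t ^ 2) / (48 * Real.sinh t ^ 5 * Vc t ^ 4)

lemma hFc_pos {t : ℝ} (ht : 0 < t) : 0 < Fc t := by
  have h1 : 1 ≤ Real.cosh t := Real.one_le_cosh t
  have h2 : t < Real.sinh t := Real.self_lt_sinh_iff.mpr ht
  have h3 : 0 < Real.sinh t := Real.sinh_pos_iff.mpr ht
  unfold Fc; nlinarith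

lemma hVc_pos {t : ℝ} (ht : 0 < t) : 0 < Vc t := Real.rpow_pos_of_pos (hFc_pos ht) _

lemma key_sinh : ∀ t : ℝ, 0 < t → t ≤ 1 →
    |Real.sinh t - (t + t ^ 3 / 6 + t ^ 5 / 120 + t ^ 7 / 5040) - t ^ 9 / 362880| ≤ t ^ 10 := by
  intro t ht ht1
  have h1 := Real.exp_bound (x := t) (by rw [abs_of_pos ht]; exact ht1) (n := 10) (by norm_num)
  have h2 := Real.exp_bound (x := -t) (by rw [abs_neg, abs_of_pos ht]; exact ht1) (n := 10)
    (by norm_num)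
  rw [abs_of_pos ht] at h1
  rw [abs_neg, abs_of_pos ht] at h2
  have hp : (0:ℝ) ≤ t ^ 10 := by positivity
  have hb : ((10 : ℕ).succ : ℝ) / ((10 : ℕ).factorial * (10 : ℕ) : ℝ) ≤ 1 / 2 := by
    norm_num [Nat.factorial]
  have h1' : |Real.exp t - ∑ m ∈ Finset.range 10, t ^ m / m.factorial| ≤ t ^ 10 * (1 / 2) :=
    le_trans h1 (by exact mul_le_mul_of_nonneg_left hb hp)
  have h2' : |Real.exp (-t) - ∑ m ∈ Finset.range 10, (-t) ^ m / m.factorial| ≤ t ^ 10 * (1 / 2) :=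
    le_trans h2 (by exact mul_le_mul_of_nonneg_left hb hp)
  have hAA : Real.sinh t - (t + t ^ 3 / 6 + t ^ 5 / 120 + t ^ 7 / 5040) - t ^ 9 / 362880
      = ((Real.exp t - ∑ m ∈ Finset.range 10, t ^ m / m.factorial)
        - (Real.exp (-t) - ∑ m ∈ Finset.range 10, (-t) ^ m / m.factorial)) / 2 := by
    rw [Real.sinh_eq]
    norm_num [Finset.sum_range_succ, Nat.factorial]
    ring
  rw [hAA]
  calc |((Real.exp t - ∑ m ∈ Finset.range 10, t ^ m / m.factorial)
        - (Real.exp (-t) - ∑ m ∈ Finset.range 10, (-t) ^ m / m.factorial)) / 2|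
      ≤ (|Real.exp t - ∑ m ∈ Finset.range 10, t ^ m / m.factorial|
        + |Real.exp (-t) - ∑ m ∈ Finset.range 10, (-t) ^ m / m.factorial|) / 2 := by
        rw [abs_div, abs_two]
        gcongr
        exact abs_sub _ _
    _ ≤ (t ^ 10 * (1 / 2) + t ^ 10 * (1 / 2)) / 2 := by gcongr
    _ ≤ t ^ 10 := by nlinarith

lemma key_cosh : ∀ t : ℝ, 0 < t → t ≤ 1 →
    |Real.cosh t - (1 + t ^ 2 / 2 + t ^ 4 / 24 + t ^ 6 / 720) - t ^ 8 / 40320| ≤ t ^ 10 := by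
  intro t ht ht1
  have h1 := Real.exp_bound (x := t) (by rw [abs_of_pos ht]; exact ht1) (n := 10) (by norm_num)
  have h2 := Real.exp_bound (x := -t) (by rw [abs_neg, abs_of_pos ht]; exact ht1) (n := 10)
    (by norm_num)
  rw [abs_of_pos ht] at h1
  rw [abs_neg, abs_of_pos ht] at h2
  have hp : (0:ℝ) ≤ t ^ 10 := by positivity
  have hb : ((10 : ℕ).succ : ℝ) / ((10 : ℕ).factorial * (10 : ℕ) : ℝ) ≤ 1 / 2 := by
    norm_num [Nat.factorial]
  have h1' : |Real.exp t - ∑ m ∈ Finset.range 10, t ^ m / m.factorial| ≤ t ^ 10 * (1 / 2) :=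
    le_trans h1 (by exact mul_le_mul_of_nonneg_left hb hp)
  have h2' : |Real.exp (-t) - ∑ m ∈ Finset.range 10, (-t) ^ m / m.factorial| ≤ t ^ 10 * (1 / 2) :=
    le_trans h2 (by exact mul_le_mul_of_nonneg_left hb hp)
  have hAA : Real.cosh t - (1 + t ^ 2 / 2 + t ^ 4 / 24 + t ^ 6 / 720) - t ^ 8 / 40320
      = ((Real.exp t - ∑ m ∈ Finset.range 10, t ^ m / m.factorial)
        + (Real.exp (-t) - ∑ m ∈ Finset.range 10, (-t) ^ m / m.factorial)) / 2 := by
    rw [Real.cosh_eq]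
    norm_num [Finset.sum_range_succ, Nat.factorial]
    ring
  rw [hAA]
  calc |((Real.exp t - ∑ m ∈ Finset.range 10, t ^ m / m.factorial)
        + (Real.exp (-t) - ∑ m ∈ Finset.range 10, (-t) ^ m / m.factorial)) / 2|
      ≤ (|Real.exp t - ∑ m ∈ Finset.range 10, t ^ m / m.factorial|
        + |Real.exp (-t) - ∑ m ∈ Finset.range 10, (-t) ^ m / m.factorial|) / 2 := by
        rw [abs_div, abs_two]
        gcongr
        exact abs_add_le _ _
    _ ≤ (t ^ 10 * (1 / 2) + t ^ 10 * (1 / 2)) / 2 := by gcongr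
    _ ≤ t ^ 10 := by nlinarith

lemma tw : Tendsto (fun t : ℝ =>
    (Real.sinh t - (t + t ^ 3 / 6 + t ^ 5 / 120 + t ^ 7 / 5040)) / t ^ 9)
    (nhdsWithin 0 (Set.Ioi 0)) (nhds (1 / 362880)) := by
  have h0 : Tendsto (fun t : ℝ =>
      (Real.sinh t - (t + t ^ 3 / 6 + t ^ 5 / 120 + t ^ 7 / 5040)) / t ^ 9 - 1 / 362880)
      (nhdsWithin 0 (Set.Ioi 0)) (nhds 0) := by
    apply squeeze_zero_norm' (a := fun t : ℝ => t)
    · filter_upwards [Ioo_mem_nhdsGT_of_mem (Set.left_mem_Ico.mpr zero_lt_one)] with t htm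
      obtain ⟨ht, ht1⟩ := htm
      have hk := key_sinh t ht ht1.le
      have h9 : (0:ℝ) < t ^ 9 := by positivity
      have hid : (Real.sinh t - (t + t ^ 3 / 6 + t ^ 5 / 120 + t ^ 7 / 5040)) / t ^ 9 - 1 / 362880
          = (Real.sinh t - (t + t ^ 3 / 6 + t ^ 5 / 120 + t ^ 7 / 5040) - t ^ 9 / 362880) / t ^ 9 := by
        field_simp
      rw [Real.norm_eq_abs, hid, abs_div, abs_of_pos h9, div_le_iff₀ h9]
      calc |Real.sinh t - (t + t ^ 3 / 6 + t ^ 5 / 120 + t ^ 7 / 5040) - t ^ 9 / 362880|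
          ≤ t ^ 10 := hk
        _ = t * t ^ 9 := by ring
    · exact tendsto_id.mono_right nhdsWithin_le_nhds
  have := h0.add (tendsto_const_nhds (x := (1 / 362880 : ℝ)))
  simpa using this

lemma tz : Tendsto (fun t : ℝ =>
    (Real.cosh t - (1 + t ^ 2 / 2 + t ^ 4 / 24 + t ^ 6 / 720)) / t ^ 8)
    (nhdsWithin 0 (Set.Ioi 0)) (nhds (1 / 40320)) := by
  have h0 : Tendsto (fun t : ℝ =>
      (Real.cosh t - (1 + t ^ 2 / 2 + t ^ 4 / 24 + t ^ 6 / 720)) / t ^ 8 - 1 / 40320)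
      (nhdsWithin 0 (Set.Ioi 0)) (nhds 0) := by
    apply squeeze_zero_norm' (a := fun t : ℝ => t ^ 2)
    · filter_upwards [Ioo_mem_nhdsGT_of_mem (Set.left_mem_Ico.mpr zero_lt_one)] with t htm
      obtain ⟨ht, ht1⟩ := htm
      have hk := key_cosh t ht ht1.le
      have h8 : (0:ℝ) < t ^ 8 := by positivity
      have hid : (Real.cosh t - (1 + t ^ 2 / 2 + t ^ 4 / 24 + t ^ 6 / 720)) / t ^ 8 - 1 / 40320
          = (Real.cosh t - (1 + t ^ 2 / 2 + t ^ 4 / 24 + t ^ 6 / 720) - t ^ 8 / 40320) / t ^ 8 := by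
        field_simp
      rw [Real.norm_eq_abs, hid, abs_div, abs_of_pos h8, div_le_iff₀ h8]
      calc |Real.cosh t - (1 + t ^ 2 / 2 + t ^ 4 / 24 + t ^ 6 / 720) - t ^ 8 / 40320|
          ≤ t ^ 10 := hk
        _ = t ^ 2 * t ^ 8 := by ring
    · have : Tendsto (fun t : ℝ => t ^ 2) (nhdsWithin 0 (Set.Ioi 0)) (nhds ((0:ℝ) ^ 2)) :=
        ((continuous_pow 2).tendsto 0).mono_left nhdsWithin_le_nhds
      simpa using this
  have := h0.add (tendsto_const_nhds (x := (1 / 40320 : ℝ)))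
  simpa using this

lemma tpow (n : ℕ) (hn : 0 < n) :
    Tendsto (fun t : ℝ => t ^ n) (nhdsWithin 0 (Set.Ioi 0)) (nhds 0) := by
  have h : Tendsto (fun t : ℝ => t ^ n) (nhds (0:ℝ)) (nhds ((0:ℝ) ^ n)) :=
    (continuous_pow n).tendsto 0
  simpa [zero_pow hn.ne'] using h.mono_left nhdsWithin_le_nhds

lemma tsd : Tendsto (fun t : ℝ => Real.sinh t / t)
    (nhdsWithin 0 (Set.Ioi 0)) (nhds 1) := by
  have hpoly : Tendsto (fun t : ℝ => 1 + t ^ 2 / 6 + t ^ 4 / 120 + t ^ 6 / 5040)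
      (nhdsWithin 0 (Set.Ioi 0)) (nhds 1) := by
    have h : Continuous (fun t : ℝ => 1 + t ^ 2 / 6 + t ^ 4 / 120 + t ^ 6 / 5040) := by
      continuity
    have := (h.tendsto 0).mono_left (nhdsWithin_le_nhds (s := Set.Ioi 0))
    norm_num at this
    exact this
  have hbig := hpoly.add ((tpow 8 (by norm_num)).mul tw)
  norm_num at hbig
  refine Tendsto.congr' ?_ hbig
  filter_upwards [self_mem_nhdsWithin] with t ht
  have htne : (t : ℝ) ≠ 0 := ne_of_gt ht
  field_simp
  ring

lemma tG : Tendsto (fun t : ℝ =>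
    (Real.cosh t * Real.sinh t - t - 2 / 3 * t ^ 3) / t ^ 5)
    (nhdsWithin 0 (Set.Ioi 0)) (nhds (2 / 15)) := by
  have hGq : Tendsto (fun t : ℝ =>
      2 / 15 + 4 / 315 * t ^ 2 + 41 / 60480 * t ^ 4 + 1 / 50400 * t ^ 6 + 1 / 3628800 * t ^ 8)
      (nhdsWithin 0 (Set.Ioi 0)) (nhds (2 / 15)) := by
    have h : Continuous (fun t : ℝ =>
        2 / 15 + 4 / 315 * t ^ 2 + 41 / 60480 * t ^ 4 + 1 / 50400 * t ^ 6 + 1 / 3628800 * t ^ 8) := by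
      continuity
    have := (h.tendsto 0).mono_left (nhdsWithin_le_nhds (s := Set.Ioi 0))
    norm_num at this
    exact this
  have hCt : Tendsto (fun t : ℝ => 1 + t ^ 2 / 2 + t ^ 4 / 24 + t ^ 6 / 720)
      (nhdsWithin 0 (Set.Ioi 0)) (nhds 1) := by
    have h : Continuous (fun t : ℝ => 1 + t ^ 2 / 2 + t ^ 4 / 24 + t ^ 6 / 720) := by
      continuity
    have := (h.tendsto 0).mono_left (nhdsWithin_le_nhds (s := Set.Ioi 0))
    norm_num at this
    exact this
  have h1 := ((tpow 4 (by norm_num)).mul tz).mul tsd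
  have h2 := ((tpow 4 (by norm_num)).mul hCt).mul tw
  have hbig := (hGq.add h1).add h2
  norm_num at hbig
  refine Tendsto.congr' ?_ hbig
  filter_upwards [self_mem_nhdsWithin] with t ht
  have htne : (t : ℝ) ≠ 0 := ne_of_gt ht
  field_simp
  ring

lemma tcs1 : Tendsto (fun t : ℝ => (Real.cosh t * Real.sinh t - t) / t)
    (nhdsWithin 0 (Set.Ioi 0)) (nhds 0) := by
  have hbig := (tG.mul (tpow 4 (by norm_num))).add ((tpow 2 (by norm_num)).const_mul (2/3 : ℝ))
  norm_num at hbig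
  refine Tendsto.congr' ?_ hbig
  filter_upwards [self_mem_nhdsWithin] with t ht
  have htne : (t : ℝ) ≠ 0 := ne_of_gt ht
  field_simp
  ring

lemma tq2 : Tendsto (fun t : ℝ => (Fc t / t ^ 3 - 1 / 2) / t ^ 2)
    (nhdsWithin 0 (Set.Ioi 0)) (nhds (1 / 10)) := by
  have hbig := tG.const_mul (3/4 : ℝ)
  norm_num at hbig
  refine Tendsto.congr' ?_ hbig
  filter_upwards [self_mem_nhdsWithin] with t ht
  have htne : (t : ℝ) ≠ 0 := ne_of_gt ht
  simp only [Fc]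
  field_simp
  ring

lemma tq : Tendsto (fun t : ℝ => Fc t / t ^ 3)
    (nhdsWithin 0 (Set.Ioi 0)) (nhds (1 / 2)) := by
  have hbig := (tq2.mul (tpow 2 (by norm_num))).add_const (1/2 : ℝ)
  norm_num at hbig
  refine Tendsto.congr' ?_ hbig
  filter_upwards [self_mem_nhdsWithin] with t ht
  have htne : (t : ℝ) ≠ 0 := ne_of_gt ht
  field_simp
  ring

lemma tA1 : Tendsto (fun t : ℝ =>
    ((-3) / 2 * (Real.cosh t * (Real.cosh t ^ 2 - 6) * (Real.cosh t * Real.sinh t - t))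
        - 5 * Real.sinh t ^ 3 + 27 / 35 * t ^ 2 * Real.sinh t ^ 5
        + 18 / 175 * t ^ 4 * Real.sinh t ^ 5) / t ^ 9)
    (nhdsWithin 0 (Set.Ioi 0)) (nhds (179 / 525)) := by
  have hPq : Tendsto (fun t : ℝ =>
      206083/604800 + 4351/19200*t^2 + 91659/1254400*t^4 + 40633/2709504*t^6
      + 8860919/4064256000*t^8 + 13508947/56899584000*t^10 + 9756749/487710720000*t^12
      + 3890119/2926264320000*t^14 + 2364049/33606316800000*t^16
      + 13688119/4608866304000000*t^18 + 1584731/15931883520000000*t^20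
      + 28218331/10840053547008000000*t^22 + 649/12546358272000000*t^24
      + 223/301112598528000000*t^26 + 29/4215576379392000000*t^28
      + 1/31616822845440000000*t^30)
      (nhdsWithin 0 (Set.Ioi 0)) (nhds (206083/604800)) := by
    have h : Continuous (fun t : ℝ =>
      206083/604800 + 4351/19200*t^2 + 91659/1254400*t^4 + 40633/2709504*t^6
      + 8860919/4064256000*t^8 + 13508947/56899584000*t^10 + 9756749/487710720000*t^12
      + 3890119/2926264320000*t^14 + 2364049/33606316800000*t^16
      + 13688119/4608866304000000*t^18 + 1584731/15931883520000000*t^20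
      + 28218331/10840053547008000000*t^22 + 649/12546358272000000*t^24
      + 223/301112598528000000*t^26 + 29/4215576379392000000*t^28
      + 1/31616822845440000000*t^30) := by fun_prop
    have := (h.tendsto 0).mono_left (nhdsWithin_le_nhds (s := Set.Ioi 0))
    norm_num at this
    exact this
  have hCt : Tendsto (fun t : ℝ => 1 + t ^ 2 / 2 + t ^ 4 / 24 + t ^ 6 / 720)
      (nhdsWithin 0 (Set.Ioi 0)) (nhds 1) := by
    have h : Continuous (fun t : ℝ => 1 + t ^ 2 / 2 + t ^ 4 / 24 + t ^ 6 / 720) := by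
      fun_prop
    have := (h.tendsto 0).mono_left (nhdsWithin_le_nhds (s := Set.Ioi 0))
    norm_num at this
    exact this
  have hpoly3 : Tendsto (fun t : ℝ => Real.cosh t ^ 2
      + Real.cosh t * (1 + t ^ 2 / 2 + t ^ 4 / 24 + t ^ 6 / 720)
      + (1 + t ^ 2 / 2 + t ^ 4 / 24 + t ^ 6 / 720) ^ 2 - 6)
      (nhdsWithin 0 (Set.Ioi 0)) (nhds (-3)) := by
    have h : Continuous (fun t : ℝ => Real.cosh t ^ 2
      + Real.cosh t * (1 + t ^ 2 / 2 + t ^ 4 / 24 + t ^ 6 / 720)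
      + (1 + t ^ 2 / 2 + t ^ 4 / 24 + t ^ 6 / 720) ^ 2 - 6) := by fun_prop
    have := (h.tendsto 0).mono_left (nhdsWithin_le_nhds (s := Set.Ioi 0))
    norm_num [Real.cosh_zero] at this
    exact this
  have hCfull : Tendsto (fun t : ℝ => (1 + t ^ 2 / 2 + t ^ 4 / 24 + t ^ 6 / 720)
      * ((1 + t ^ 2 / 2 + t ^ 4 / 24 + t ^ 6 / 720) ^ 2 - 6))
      (nhdsWithin 0 (Set.Ioi 0)) (nhds (-5)) := by
    have h : Continuous (fun t : ℝ => (1 + t ^ 2 / 2 + t ^ 4 / 24 + t ^ 6 / 720)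
      * ((1 + t ^ 2 / 2 + t ^ 4 / 24 + t ^ 6 / 720) ^ 2 - 6)) := by fun_prop
    have := (h.tendsto 0).mono_left (nhdsWithin_le_nhds (s := Set.Ioi 0))
    norm_num at this
    exact this
  have hssS : Tendsto (fun t : ℝ => Real.sinh t ^ 2
      + Real.sinh t * (t + t ^ 3 / 6 + t ^ 5 / 120 + t ^ 7 / 5040)
      + (t + t ^ 3 / 6 + t ^ 5 / 120 + t ^ 7 / 5040) ^ 2)
      (nhdsWithin 0 (Set.Ioi 0)) (nhds 0) := by
    have h : Continuous (fun t : ℝ => Real.sinh t ^ 2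
      + Real.sinh t * (t + t ^ 3 / 6 + t ^ 5 / 120 + t ^ 7 / 5040)
      + (t + t ^ 3 / 6 + t ^ 5 / 120 + t ^ 7 / 5040) ^ 2) := by fun_prop
    have := (h.tendsto 0).mono_left (nhdsWithin_le_nhds (s := Set.Ioi 0))
    norm_num [Real.sinh_zero] at this
    exact this
  have hs4 : Tendsto (fun t : ℝ => Real.sinh t ^ 4
      + Real.sinh t ^ 3 * (t + t ^ 3 / 6 + t ^ 5 / 120 + t ^ 7 / 5040)
      + Real.sinh t ^ 2 * (t + t ^ 3 / 6 + t ^ 5 / 120 + t ^ 7 / 5040) ^ 2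
      + Real.sinh t * (t + t ^ 3 / 6 + t ^ 5 / 120 + t ^ 7 / 5040) ^ 3
      + (t + t ^ 3 / 6 + t ^ 5 / 120 + t ^ 7 / 5040) ^ 4)
      (nhdsWithin 0 (Set.Ioi 0)) (nhds 0) := by
    have h : Continuous (fun t : ℝ => Real.sinh t ^ 4
      + Real.sinh t ^ 3 * (t + t ^ 3 / 6 + t ^ 5 / 120 + t ^ 7 / 5040)
      + Real.sinh t ^ 2 * (t + t ^ 3 / 6 + t ^ 5 / 120 + t ^ 7 / 5040) ^ 2
      + Real.sinh t * (t + t ^ 3 / 6 + t ^ 5 / 120 + t ^ 7 / 5040) ^ 3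
      + (t + t ^ 3 / 6 + t ^ 5 / 120 + t ^ 7 / 5040) ^ 4) := by fun_prop
    have := (h.tendsto 0).mono_left (nhdsWithin_le_nhds (s := Set.Ioi 0))
    norm_num [Real.sinh_zero] at this
    exact this
  have hcoef : Tendsto (fun t : ℝ => (27 / 35 + 18 / 175 * t ^ 2) * t ^ 2)
      (nhdsWithin 0 (Set.Ioi 0)) (nhds 0) := by
    have h : Continuous (fun t : ℝ => (27 / 35 + 18 / 175 * t ^ 2) * t ^ 2) := by fun_prop
    have := (h.tendsto 0).mono_left (nhdsWithin_le_nhds (s := Set.Ioi 0))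
    norm_num at this
    exact this
  have f1 := ((tz.const_mul ((-3 : ℝ)/2)).mul hpoly3).mul tcs1
  have f2 := (hCfull.const_mul ((-3 : ℝ)/2)).mul ((tz.mul tsd).add (hCt.mul tw))
  have f3 := (tw.const_mul ((-5 : ℝ))).mul hssS
  have f4 := (hcoef.mul tw).mul hs4
  have hbig := (((hPq.add f1).add f2).add f3).add f4
  norm_num at hbig
  refine Tendsto.congr' ?_ hbig
  filter_upwards [self_mem_nhdsWithin] with t ht
  have htne : (t : ℝ) ≠ 0 := ne_of_gt ht
  field_simp
  ring

lemma hqgt : ∀ᶠ t in nhdsWithin 0 (Set.Ioi 0), 1 / 2 < Fc t / t ^ 3 := by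
  have h1 := tq2.eventually (eventually_gt_nhds (show (0:ℝ) < 1 / 10 by norm_num))
  filter_upwards [h1, self_mem_nhdsWithin] with t h2 ht
  have ht2 : (0:ℝ) < t ^ 2 := pow_pos ht 2
  have h3 : Fc t / t ^ 3 - 1 / 2 = (Fc t / t ^ 3 - 1 / 2) / t ^ 2 * t ^ 2 := by
    exact (div_mul_cancel₀ _ ht2.ne').symm
  have h4 : 0 < Fc t / t ^ 3 - 1 / 2 := by rw [h3]; exact mul_pos h2 ht2
  linarith

lemma hVq {t : ℝ} (ht : 0 < t) : Vc t ^ 2 / t ^ 2 = (Fc t / t ^ 3) ^ ((2:ℝ)/3) := by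
  have hF := (hFc_pos ht).le
  rw [Real.div_rpow hF (by positivity)]
  congr 1
  · rw [Vc, ← Real.rpow_natCast (Fc t ^ ((1:ℝ)/3)) 2, ← Real.rpow_mul hF]
    norm_num
  · rw [← Real.rpow_natCast t 3, ← Real.rpow_mul ht.le, ← Real.rpow_natCast t 2]
    norm_num

lemma ha : ((1:ℝ)/2) ^ ((2:ℝ)/3) = (2:ℝ) ^ (-(2:ℝ)/3) := by
  rw [show ((1:ℝ)/2) = (2:ℝ)⁻¹ by norm_num, Real.inv_rpow (by norm_num),
    ← Real.rpow_neg (by norm_num)]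
  norm_num

lemma hb : ((1:ℝ)/2) ^ ((2:ℝ)/3 - 1) = (2:ℝ) ^ ((1:ℝ)/3) := by
  rw [show ((2:ℝ)/3 - 1) = -((1:ℝ)/3) by norm_num,
    show ((1:ℝ)/2) = (2:ℝ)⁻¹ by norm_num, Real.inv_rpow (by norm_num),
    ← Real.rpow_neg (by norm_num), neg_neg]

lemma div_mul_div_self' {X d c : ℝ} (hd : d ≠ 0) : X / d * (d / c) = X / c := by
  rw [div_mul_div_comm, mul_comm X d, mul_div_mul_left _ _ hd]

lemma tV2 : Tendsto (fun t : ℝ =>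
    (Vc t ^ 2 / t ^ 2 - (2 : ℝ) ^ (-(2 : ℝ) / 3)) / t ^ 2)
    (nhdsWithin 0 (Set.Ioi 0)) (nhds ((2 : ℝ) ^ ((1 : ℝ) / 3) / 15)) := by
  have hqne : Tendsto (fun t : ℝ => Fc t / t ^ 3) (nhdsWithin 0 (Set.Ioi 0))
      (nhdsWithin (1/2) {y | y ≠ (1/2 : ℝ)}) := by
    apply tendsto_nhdsWithin_of_tendsto_nhds_of_eventually_within _ tq
    filter_upwards [hqgt] with t h
    exact ne_of_gt h
  have hderiv : HasDerivAt (fun y : ℝ => y ^ ((2:ℝ)/3))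
      ((2:ℝ)/3 * ((1:ℝ)/2) ^ ((2:ℝ)/3 - 1)) (1/2) :=
    Real.hasDerivAt_rpow_const (Or.inl (by norm_num))
  have hslope := (hasDerivAt_iff_tendsto_slope.mp hderiv).comp hqne
  have hprod := hslope.mul tq2
  have hval : (2:ℝ)/3 * ((1:ℝ)/2) ^ ((2:ℝ)/3 - 1) * (1/10) = (2:ℝ) ^ ((1:ℝ)/3) / 15 := by
    rw [hb]; ring
  rw [← hval]
  refine Tendsto.congr' ?_ hprod
  filter_upwards [hqgt, self_mem_nhdsWithin] with t hgt ht
  have htne : (t:ℝ) ≠ 0 := ne_of_gt ht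
  have hne : Fc t / t ^ 3 - 1/2 ≠ 0 := by
    have := hgt; intro h; rw [sub_eq_zero] at h; rw [h] at this; exact lt_irrefl _ this
  show slope (fun y : ℝ => y ^ ((2:ℝ)/3)) (1/2) (Fc t / t ^ 3) * ((Fc t / t ^ 3 - 1/2) / t ^ 2)
      = _
  rw [slope_def_field, hVq ht, ← ha, div_mul_div_self' hne]

lemma tV : Tendsto (fun t : ℝ => Vc t / t)
    (nhdsWithin 0 (Set.Ioi 0)) (nhds ((2 : ℝ) ^ (-(1 : ℝ) / 3))) := by
  have hcont : ContinuousAt (fun y : ℝ => y ^ ((1:ℝ)/3)) (1/2) :=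
    Real.continuousAt_rpow_const _ _ (Or.inl (by norm_num))
  have hcomp := (hcont.tendsto).comp tq
  have hval : ((1:ℝ)/2) ^ ((1:ℝ)/3) = (2:ℝ) ^ (-(1:ℝ)/3) := by
    rw [show ((1:ℝ)/2) = (2:ℝ)⁻¹ by norm_num, Real.inv_rpow (by norm_num),
      ← Real.rpow_neg (by norm_num)]
    norm_num
  rw [← hval]
  refine Tendsto.congr' ?_ hcomp
  filter_upwards [self_mem_nhdsWithin] with t ht
  have ht' : (0:ℝ) < t := ht
  show (Fc t / t ^ 3) ^ ((1:ℝ)/3) = Vc t / t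
  rw [Real.div_rpow (hFc_pos ht').le (by positivity), Vc]
  congr 1
  rw [← Real.rpow_natCast t 3, ← Real.rpow_mul ht'.le]
  norm_num

lemma main : Tendsto Gam (nhdsWithin 0 (Set.Ioi 0))
    (nhds (179 / 6300 * (2 : ℝ) ^ (-(2 : ℝ) / 3))) := by
  -- numerator and denominator building blocks
  have h27 : 48 * c0 * (2:ℝ) ^ (-(2:ℝ)/3) = 27/35 := by
    have hx : (2:ℝ) ^ (-(1:ℝ)/3) * (2:ℝ) ^ (-(2:ℝ)/3) = 1/2 := by
      rw [← Real.rpow_add (by norm_num : (0:ℝ) < 2),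
        show (-(1:ℝ)/3 + -(2:ℝ)/3) = -1 by norm_num, Real.rpow_neg_one]
      norm_num
    simp only [c0]
    linear_combination (54/35 : ℝ) * hx
  have h54 : 48 * c0 * (2:ℝ) ^ ((1:ℝ)/3) = 54/35 := by
    have hx : (2:ℝ) ^ (-(1:ℝ)/3) * (2:ℝ) ^ ((1:ℝ)/3) = 1 := by
      rw [← Real.rpow_add (by norm_num : (0:ℝ) < 2),
        show (-(1:ℝ)/3 + (1:ℝ)/3) = 0 by norm_num, Real.rpow_zero]
    simp only [c0]
    linear_combination (54/35 : ℝ) * hx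
  -- A1 with symbolic coefficients
  have tA1' : Tendsto (fun t : ℝ =>
      (-2 * Real.cosh t * (Real.cosh t ^ 2 - 6) * Fc t - 5 * Real.sinh t ^ 3
        + 48 * c0 * ((2:ℝ) ^ (-(2:ℝ)/3) * t ^ 2 + (2:ℝ) ^ ((1:ℝ)/3) / 15 * t ^ 4)
          * Real.sinh t ^ 5) / t ^ 9)
      (nhdsWithin 0 (Set.Ioi 0)) (nhds (179/525)) := by
    refine tA1.congr fun t => ?_
    congr 1
    simp only [Fc]
    linear_combination (-(t^2 * Real.sinh t ^ 5)) * h27 + (-(t^4 * Real.sinh t ^ 5 / 15)) * h54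
  -- remainder term
  have TR : Tendsto (fun t : ℝ =>
      (Vc t ^ 2 - (2:ℝ) ^ (-(2:ℝ)/3) * t ^ 2 - (2:ℝ) ^ ((1:ℝ)/3) / 15 * t ^ 4) / t ^ 4)
      (nhdsWithin 0 (Set.Ioi 0)) (nhds 0) := by
    have h := tV2.sub_const ((2:ℝ) ^ ((1:ℝ)/3) / 15)
    norm_num at h
    refine Tendsto.congr' ?_ h
    filter_upwards [self_mem_nhdsWithin] with t ht
    have htne : (t:ℝ) ≠ 0 := ne_of_gt ht
    field_simp
  have hnum := tA1'.add (((tsd.pow 5).const_mul (48 * c0)).mul TR)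
  norm_num at hnum
  have hden := ((tV.pow 4).const_mul (48 : ℝ)).mul (tsd.pow 5)
  have hdenne : (48 : ℝ) * ((2:ℝ) ^ (-(1:ℝ)/3)) ^ 4 * 1 ^ 5 ≠ 0 := by
    have : (0:ℝ) < (2:ℝ) ^ (-(1:ℝ)/3) := Real.rpow_pos_of_pos (by norm_num) _
    positivity
  have hlim := hnum.div hden hdenne
  have hval : 179/525 / (48 * ((2:ℝ) ^ (-(1:ℝ)/3)) ^ 4 * 1 ^ 5)
      = 179 / 6300 * (2:ℝ) ^ (-(2:ℝ)/3) := by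
    have h4 : ((2:ℝ) ^ (-(1:ℝ)/3)) ^ 4 = (2:ℝ) ^ (-(4:ℝ)/3) := by
      rw [← Real.rpow_natCast ((2:ℝ) ^ (-(1:ℝ)/3)) 4, ← Real.rpow_mul (by norm_num)]
      norm_num
    rw [h4, div_eq_iff]
    · have hy : (2:ℝ) ^ (-(2:ℝ)/3) * (2:ℝ) ^ (-(4:ℝ)/3) = 1/4 := by
        rw [← Real.rpow_add (by norm_num : (0:ℝ) < 2),
          show (-(2:ℝ)/3 + -(4:ℝ)/3) = -2 by norm_num]
        rw [show (-2 : ℝ) = ((-2 : ℤ) : ℝ) by norm_num, Real.rpow_intCast]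
        norm_num
      linear_combination (-(179 * 48 / 6300) : ℝ) * hy
    · have : (0:ℝ) < (2:ℝ) ^ (-(4:ℝ)/3) := Real.rpow_pos_of_pos (by norm_num) _
      positivity
  rw [← hval]
  refine Tendsto.congr' ?_ hlim
  filter_upwards [self_mem_nhdsWithin] with t ht
  have ht' : (0:ℝ) < t := ht
  have htne : (t:ℝ) ≠ 0 := ne_of_gt ht'
  have hsp : 0 < Real.sinh t := Real.sinh_pos_iff.mpr ht'
  have hVp : 0 < Vc t := hVc_pos ht'
  rw [Pi.div_apply]
  simp only [Gam]
  field_simp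
  ring

lemma key_id (t : ℝ) (ht : 0 < t) :
    (phi (Real.cosh t) * b0 (Real.cosh t) + 9 / 280 * (2 : ℝ) ^ (-(1 : ℝ) / 3)) /
      zeta (Real.cosh t) = Gam t := by
  have hsp : 0 < Real.sinh t := Real.sinh_pos_iff.mpr ht
  have hFp : 0 < Fc t := hFc_pos ht
  have hVp : 0 < Vc t := hVc_pos ht
  have hx2 : Real.cosh t ^ 2 - 1 = Real.sinh t ^ 2 := by
    rw [Real.cosh_sq]; ring
  have hsq : Real.sqrt (Real.cosh t ^ 2 - 1) = Real.sinh t := by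
    rw [hx2, Real.sqrt_sq hsp.le]
  have har : _root_.arcosh (Real.cosh t) = t := by
    rw [_root_.arcosh, hsq, Real.cosh_add_sinh, Real.log_exp]
  have hzeta : zeta (Real.cosh t) = Vc t ^ 2 := by
    rw [zeta, hsq, har, Vc, ← Real.rpow_natCast (Fc t ^ ((1:ℝ)/3)) 2,
      ← Real.rpow_mul hFp.le]
    norm_num [Fc]
  have hz12 : zeta (Real.cosh t) ^ ((1:ℝ)/2) = Vc t := by
    rw [hzeta, ← Real.rpow_natCast (Vc t) 2, ← Real.rpow_mul hVp.le]
    norm_num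
  have hz32 : zeta (Real.cosh t) ^ ((3:ℝ)/2) = Vc t ^ 3 := by
    rw [hzeta, ← Real.rpow_natCast (Vc t) 2, ← Real.rpow_mul hVp.le,
      ← Real.rpow_natCast (Vc t) 3]
    norm_num
  have h32' : (Real.cosh t ^ 2 - 1) ^ ((3:ℝ)/2) = Real.sinh t ^ 3 := by
    rw [hx2, ← Real.rpow_natCast (Real.sinh t) 2, ← Real.rpow_mul hsp.le,
      ← Real.rpow_natCast (Real.sinh t) 3]
    norm_num
  have hV3 : Vc t ^ 3 = Fc t := by
    rw [Vc, ← Real.rpow_natCast (Fc t ^ ((1:ℝ)/3)) 3, ← Real.rpow_mul hFp.le]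
    norm_num
  rw [phi, b0, hz12, hz32, h32', hzeta, hx2, Gam, ← hV3, c0]
  have hVne : Vc t ≠ 0 := ne_of_gt hVp
  have hsne : Real.sinh t ≠ 0 := ne_of_gt hsp
  field_simp
  ring

lemma harc : Tendsto _root_.arcosh (nhdsWithin 1 (Set.Ioi 1)) (nhdsWithin 0 (Set.Ioi 0)) := by
  apply tendsto_nhdsWithin_of_tendsto_nhds_of_eventually_within
  · have h1 : ContinuousAt (fun x : ℝ => x + Real.sqrt (x ^ 2 - 1)) 1 := by
      fun_prop
    have h2 : ContinuousAt _root_.arcosh 1 := by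
      apply ContinuousAt.comp (Real.continuousAt_log (by norm_num)) h1
    have h3 := h2.tendsto.mono_left (nhdsWithin_le_nhds (s := Set.Ioi 1))
    have h4 : _root_.arcosh 1 = 0 := by
      simp [_root_.arcosh]
    rwa [h4] at h3
  · filter_upwards [self_mem_nhdsWithin] with x hx
    have hx1 : (1:ℝ) < x := hx
    have : (1:ℝ) < x + Real.sqrt (x ^ 2 - 1) := by
      have := Real.sqrt_nonneg (x ^ 2 - 1); linarith
    exact Real.log_pos this

lemma cosh_arcosh {x : ℝ} (hx : 1 < x) : Real.cosh (_root_.arcosh x) = x := by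
  have h1 : (0:ℝ) ≤ x ^ 2 - 1 := by nlinarith
  have hs := Real.sq_sqrt h1
  have hy : (0:ℝ) < x + Real.sqrt (x ^ 2 - 1) := by
    have := Real.sqrt_nonneg (x ^ 2 - 1); linarith
  rw [_root_.arcosh, Real.cosh_eq, Real.exp_log hy, Real.exp_neg, Real.exp_log hy]
  have hinv : (x + Real.sqrt (x ^ 2 - 1))⁻¹ = x - Real.sqrt (x ^ 2 - 1) := by
    apply inv_eq_of_mul_eq_one_right
    linear_combination -hs
  rw [hinv]; ring

end CoeffAux

theorem tendsto_phi_mul_b0_coeff_one :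
    Tendsto (fun x : ℝ =>
        (phi x * b0 x + (9 / 280) * (2 : ℝ) ^ (-(1 : ℝ) / 3)) / zeta x)
      (nhdsWithin 1 (Set.Ioi 1))
      (nhds ((179 / 6300) * (2 : ℝ) ^ (-(2 : ℝ) / 3))) := by
  refine Tendsto.congr' ?_ (CoeffAux.main.comp CoeffAux.harc)
  filter_upwards [self_mem_nhdsWithin] with x hx
  have hx1 : (1:ℝ) < x := hx
  have h0 : 0 < _root_.arcosh x := by
    apply Real.log_pos
    have := Real.sqrt_nonneg (x ^ 2 - 1); linarith
  have h := CoeffAux.key_id (_root_.arcosh x) h0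
  rw [CoeffAux.cosh_arcosh hx1] at h
  exact h.symm
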